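/- arXiv:2105.09098 — 12 statements merged into one kernel-verified Lean document; each statement's English description precedes it below -/
import Mathlib

section
/- If A and B are bounded linear operators between Hilbert spaces H and K with A*A = A*B and range(A) ⊆ range(B) (i.e., A is below B in the left star order), then there exists an idempotent bounded operator Q on H such that A = P_A B = B Q, where P_A is the orthogonal projection onto the closure of range(A). In particular A is below B in the minus order. -/
open ContinuousLinearMap Filter Topology

/-- The orthogonal projection of `F` onto the closure of the range of `A`. -/
noncomputable def projCR {E F : Type*} [NormedAddCommGroup E] [InnerProductSpace ℂ E]
    [NormedAddCommGroup F] [InnerProductSpace ℂ F] [CompleteSpace F]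
    (A : E →L[ℂ] F) : F →L[ℂ] F :=
  (LinearMap.range (A : E →ₗ[ℂ] F)).topologicalClosure.subtypeL ∘L
    Submodule.orthogonalProjectionOnto (LinearMap.range (A : E →ₗ[ℂ] F)).topologicalClosure

/-- Douglas-type lemma: range inclusion gives a bounded solution `C` of `B ∘ C = A`. -/
theorem exists_clm_solution {H K : Type*} [NormedAddCommGroup H] [InnerProductSpace ℂ H]
    [CompleteSpace H] [NormedAddCommGroup K] [InnerProductSpace ℂ K] [CompleteSpace K]
    (A B : H →L[ℂ] K) (h2 : LinearMap.range (A : H →ₗ[ℂ] K) ≤ LinearMap.range (B : H →ₗ[ℂ] K)) :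
    ∃ C : H →L[ℂ] H, ∀ x, B (C x) = A x := by
  set U : Submodule ℂ H := (LinearMap.ker (B : H →ₗ[ℂ] K))ᗮ with hU
  haveI : CompleteSpace (LinearMap.ker (B : H →ₗ[ℂ] K)) := (ContinuousLinearMap.isClosed_ker B).completeSpace_coe
  have hker : (LinearMap.ker (B : H →ₗ[ℂ] K) : Submodule ℂ H) ≤ Uᗮ := by
    rw [hU, Submodule.orthogonal_orthogonal]
  have hker2 : Uᗮ ≤ (LinearMap.ker (B : H →ₗ[ℂ] K) : Submodule ℂ H) := by
    rw [hU, Submodule.orthogonal_orthogonal]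
  have uniq : ∀ u v : H, u ∈ U → v ∈ U → B u = B v → u = v := by
    intro u v hu hv hB
    have h1 : u - v ∈ U := sub_mem hu hv
    have h2' : u - v ∈ Uᗮ := hker (by simp [LinearMap.mem_ker, map_sub, hB])
    have := h2' _ h1
    rw [inner_self_eq_zero] at this
    exact sub_eq_zero.mp this
  have Bproj : ∀ w : H, B ((Submodule.orthogonalProjectionOnto U w : U) : H) = B w := by
    intro w
    have hm : w - (Submodule.orthogonalProjectionOnto U w : H) ∈ Uᗮ :=
      Submodule.sub_starProjection_mem_orthogonal w
    have h0 : B (w - (Submodule.orthogonalProjectionOnto U w : H)) = 0 := hker2 hm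
    rw [map_sub, sub_eq_zero] at h0
    exact h0.symm
  -- choose a preimage for each x
  have hpre : ∀ x : H, ∃ w : H, B w = A x := fun x =>
    h2 (LinearMap.mem_range_self (A : H →ₗ[ℂ] K) x)
  set g : H → H := fun x => ((Submodule.orthogonalProjectionOnto U (Classical.choose (hpre x)) : U) : H)
    with hg
  have hgU : ∀ x, g x ∈ U := fun x => Submodule.coe_mem _
  have hBg : ∀ x, B (g x) = A x := by
    intro x
    rw [hg]
    simp only
    rw [Bproj]
    exact Classical.choose_spec (hpre x)
  have hg0 : g 0 = 0 := by
    refine uniq _ _ (hgU 0) (zero_mem U) ?_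
    rw [hBg]; simp
  have hglin : ∀ (c : ℂ) (x y : H), g (c • x + y) = c • g x + g y := by
    intro c x y
    refine uniq _ _ (hgU _) (add_mem (Submodule.smul_mem _ _ (hgU x)) (hgU y)) ?_
    rw [hBg, map_add, map_smul, map_add, map_smul, hBg, hBg]
  let gl : H →ₗ[ℂ] H :=
    { toFun := g
      map_add' := fun x y => by simpa using hglin 1 x y
      map_smul' := fun c x => by simpa [hg0] using hglin c x 0 }
  have hgcl : ∀ (u : ℕ → H) (x y : H), Tendsto u atTop (nhds x) →
      Tendsto (gl ∘ u) atTop (nhds y) → y = gl x := by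
    intro u x y hux hgy
    have hyU : y ∈ U := by
      have : IsClosed (U : Set H) := Submodule.isClosed_orthogonal _
      exact this.mem_of_tendsto hgy (Filter.Eventually.of_forall fun n => hgU (u n))
    refine uniq _ _ hyU (hgU x) ?_
    have t1 : Tendsto (fun n => B (gl (u n))) atTop (nhds (B y)) :=
      (B.continuous.tendsto y).comp hgy
    have t2 : Tendsto (fun n => B (gl (u n))) atTop (nhds (A x)) := by
      have : (fun n => B (gl (u n))) = fun n => A (u n) := by
        funext n; exact hBg (u n)
      rw [this]
      exact (A.continuous.tendsto x).comp hux
    exact (tendsto_nhds_unique t1 t2).trans (hBg x).symm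
  exact ⟨ContinuousLinearMap.ofSeqClosedGraph hgcl, fun x => hBg x⟩

theorem stmt0 {H K : Type*} [NormedAddCommGroup H] [InnerProductSpace ℂ H] [CompleteSpace H]
    [NormedAddCommGroup K] [InnerProductSpace ℂ K] [CompleteSpace K]
    (A B : H →L[ℂ] K)
    (h1 : (adjoint A) ∘L A = (adjoint A) ∘L B)
    (h2 : LinearMap.range (A : H →ₗ[ℂ] K) ≤ LinearMap.range (B : H →ₗ[ℂ] K)) :
    ∃ Q : H →L[ℂ] H, Q ∘L Q = Q ∧ A = (projCR A) ∘L B ∧ A = B ∘L Q := by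
  set R : Submodule ℂ K := (LinearMap.range (A : H →ₗ[ℂ] K)).topologicalClosure with hR
  -- projCR A fixes elements of range A
  have hfix : ∀ z : H, projCR A (A z) = A z := by
    intro z
    have : A z ∈ R := (LinearMap.range (A : H →ₗ[ℂ] K)).le_topologicalClosure (LinearMap.mem_range_self (A : H →ₗ[ℂ] K) z)
    simp only [projCR, ContinuousLinearMap.comp_apply, Submodule.subtypeL_apply]
    exact Submodule.starProjection_eq_self_iff.mpr this
  -- B x - A x is orthogonal to R
  have hperp : ∀ x : H, projCR A (B x - A x) = 0 := by
    intro x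
    have hm : B x - A x ∈ (LinearMap.range (A : H →ₗ[ℂ] K))ᗮ := by
      rintro _ ⟨y, rfl⟩
      have hadj : adjoint A (B x - A x) = 0 := by
        rw [map_sub, ← ContinuousLinearMap.comp_apply, ← ContinuousLinearMap.comp_apply, h1,
          sub_self]
      calc inner ℂ (A y) (B x - A x)
          = inner ℂ y (adjoint A (B x - A x)) := (ContinuousLinearMap.adjoint_inner_right A y _).symm
        _ = (0 : ℂ) := by rw [hadj, inner_zero_right]
    have hm' : B x - A x ∈ Rᗮ := by
      rw [hR, ← Submodule.orthogonal_orthogonal_eq_closure]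
      exact Submodule.le_orthogonal_orthogonal _ hm
    simp only [projCR, ContinuousLinearMap.comp_apply, Submodule.subtypeL_apply]
    rw [Submodule.orthogonalProjectionOnto_apply_of_mem_orthogonal hm']
    simp
  have part1 : ∀ x, A x = projCR A (B x) := by
    intro x
    have hs : projCR A (B x) = A x := by
      conv_lhs => rw [show B x = A x + (B x - A x) by abel]
      rw [map_add, hfix, hperp, add_zero]
    exact hs.symm
  -- Douglas solution
  obtain ⟨C, hC⟩ := exists_clm_solution A B h2
  -- A ∘ C = A
  have hAC : ∀ y, A (C y) = A y := by
    intro y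
    rw [part1 (C y), hC y]
    exact hfix y
  -- projection onto (ker A)ᗮ
  haveI : CompleteSpace (LinearMap.ker (A : H →ₗ[ℂ] K)) := (ContinuousLinearMap.isClosed_ker A).completeSpace_coe
  set V : Submodule ℂ H := (LinearMap.ker (A : H →ₗ[ℂ] K))ᗮ with hV
  set E : H →L[ℂ] H := V.subtypeL ∘L Submodule.orthogonalProjectionOnto V with hE
  have hVk : (LinearMap.ker (A : H →ₗ[ℂ] K) : Submodule ℂ H) ≤ Vᗮ := by
    rw [hV, Submodule.orthogonal_orthogonal]
  have hVk2 : Vᗮ ≤ (LinearMap.ker (A : H →ₗ[ℂ] K) : Submodule ℂ H) := by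
    rw [hV, Submodule.orthogonal_orthogonal]
  have hEker : ∀ v ∈ LinearMap.ker (A : H →ₗ[ℂ] K), E v = 0 := by
    intro v hv
    have : v ∈ Vᗮ := hVk hv
    simp only [hE, ContinuousLinearMap.comp_apply, Submodule.subtypeL_apply]
    rw [Submodule.orthogonalProjectionOnto_apply_of_mem_orthogonal this]
    simp
  have hAE : ∀ x, A (E x) = A x := by
    intro x
    have hm : x - E x ∈ LinearMap.ker (A : H →ₗ[ℂ] K) := by
      have h' : x - ((Submodule.orthogonalProjectionOnto V x : V) : H) ∈ Vᗮ :=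
        Submodule.sub_starProjection_mem_orthogonal x
      exact hVk2 h'
    have h0 : A (x - E x) = 0 := hm
    rw [map_sub, sub_eq_zero] at h0
    exact h0.symm
  have hEE : ∀ x, E (E x) = E x := by
    intro x
    simp only [hE, ContinuousLinearMap.comp_apply, Submodule.subtypeL_apply]
    congr 1
    exact Submodule.orthogonalProjectionOnto_mem_subspace_eq_self _
  have hECE : ∀ x, E (C (E x)) = E x := by
    intro x
    have hk : C (E x) - E x ∈ LinearMap.ker (A : H →ₗ[ℂ] K) := by
      rw [LinearMap.mem_ker, map_sub, ContinuousLinearMap.coe_coe, hAC, sub_self]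
    have : E (C (E x) - E x) = 0 := hEker _ hk
    rw [map_sub, sub_eq_zero] at this
    rw [this, hEE]
  refine ⟨C ∘L E, ?_, ?_, ?_⟩
  · ext x
    simp only [ContinuousLinearMap.comp_apply]
    rw [hECE]
  · ext x
    simpa using part1 x
  · ext x
    simp only [ContinuousLinearMap.comp_apply]
    rw [hC, hAE]
end

section
/- For bounded operators A, B between Hilbert spaces, A ≤* B in the star order (i.e., A*A = A*B and AA* = BA*) if and only if A = P_A B and A = B P_{A*}, where P_A and P_{A*} are the orthogonal projections onto the closures of range(A) and range(A*) respectively. -/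
open ContinuousLinearMap

variable {H K : Type*} [NormedAddCommGroup H] [InnerProductSpace ℂ H] [CompleteSpace H]
  [NormedAddCommGroup K] [InnerProductSpace ℂ K] [CompleteSpace K]

lemma projCR_comp_self (A : H →L[ℂ] K) : (projCR A) ∘L A = A := by
  ext x
  simp only [projCR, coe_comp', Function.comp_apply, Submodule.subtypeL_apply]
  exact Submodule.starProjection_eq_self_iff.mpr
    (Submodule.le_topologicalClosure _ (LinearMap.mem_range_self _ x))

lemma projCR_selfAdjoint (A : H →L[ℂ] K) : adjoint (projCR A) = projCR A :=
  (isSelfAdjoint_starProjection (LinearMap.range (A : H →ₗ[ℂ] K)).topologicalClosure)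

set_option synthInstance.maxHeartbeats 1000000 in
lemma closure_range_orthogonal (A : H →L[ℂ] K) :
    ((LinearMap.range (A : H →ₗ[ℂ] K)).topologicalClosure)ᗮ = (LinearMap.range (A : H →ₗ[ℂ] K))ᗮ := by
  rw [← Submodule.orthogonal_orthogonal_eq_closure, Submodule.orthogonal_orthogonal]

lemma projCR_comp_eq_zero {A : H →L[ℂ] K} {C : H →L[ℂ] K}
    (h : adjoint A ∘L C = 0) : projCR A ∘L C = 0 := by
  ext x
  have hmem : C x ∈ ((LinearMap.range (A : H →ₗ[ℂ] K)).topologicalClosure)ᗮ := by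
    rw [closure_range_orthogonal]
    rw [Submodule.mem_orthogonal]
    rintro u ⟨z, rfl⟩
    have : adjoint A (C x) = 0 := by
      have := congrArg (fun T => T x) h
      simpa using this
    calc (inner ℂ (A z) (C x) : ℂ) = inner ℂ z (adjoint A (C x)) :=
          (ContinuousLinearMap.adjoint_inner_right A z (C x)).symm
      _ = 0 := by rw [this]; exact inner_zero_right z
  simp only [projCR, coe_comp', Function.comp_apply, Submodule.subtypeL_apply, zero_apply]
  rw [Submodule.orthogonalProjectionOnto_apply_of_mem_orthogonal hmem]
  simp

theorem stmt1 (A B : H →L[ℂ] K) :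
    ((adjoint A) ∘L A = (adjoint A) ∘L B ∧ A ∘L (adjoint A) = B ∘L (adjoint A)) ↔
      (A = (projCR A) ∘L B ∧ A = B ∘L (projCR (adjoint A))) := by
  have hPA : projCR A ∘L A = A := projCR_comp_self A
  have hPAs : projCR (adjoint A) ∘L adjoint A = adjoint A := projCR_comp_self (adjoint A)
  -- A ∘L projCR (adjoint A) = A, by taking adjoints
  have hAP : A ∘L projCR (adjoint A) = A := by
    have := congrArg adjoint hPAs
    rwa [adjoint_comp, projCR_selfAdjoint, adjoint_adjoint] at this
  constructor
  · rintro ⟨h1, h2⟩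
    constructor
    · have hz : adjoint A ∘L (B - A) = 0 := by
        rw [comp_sub, h1, sub_self]
      have := projCR_comp_eq_zero hz
      rw [comp_sub, hPA, sub_eq_zero] at this
      exact this.symm
    · -- (B - A) ∘L adjoint A = 0, so B - A vanishes on range(A*), hence on its closure
      have hz : (B - A) ∘L adjoint A = 0 := by
        rw [sub_comp, ← h2, sub_self]
      -- take adjoints: A ∘L adjoint (B - A) = 0 ... instead use projCR trick on adjoints
      have azero1 : adjoint (0 : K →L[ℂ] K) = 0 := by ext x; simp
      have azero2 : adjoint (0 : K →L[ℂ] H) = (0 : H →L[ℂ] K) := by ext x; simp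
      have hz' : adjoint (adjoint A) ∘L adjoint (B - A) = 0 := by
        rw [← adjoint_comp, hz, azero1]
      have := projCR_comp_eq_zero (A := adjoint A) hz'
      have := congrArg adjoint this
      rw [adjoint_comp, adjoint_adjoint, projCR_selfAdjoint, azero2, sub_comp,
        hAP, sub_eq_zero] at this
      exact this.symm
  · rintro ⟨h1, h2⟩
    have hA'P : adjoint A ∘L projCR A = adjoint A := by
      have := congrArg adjoint hPA
      rwa [adjoint_comp, projCR_selfAdjoint] at this
    constructor
    · calc adjoint A ∘L A = adjoint A ∘L (projCR A ∘L B) := by rw [← h1]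
        _ = adjoint A ∘L B := by rw [← comp_assoc, hA'P]
    · calc A ∘L adjoint A = (B ∘L projCR (adjoint A)) ∘L adjoint A := by rw [← h2]
        _ = B ∘L adjoint A := by rw [comp_assoc, hPAs]
end

section
/- If A ≤* B in the star order (A*A = A*B and AA* = BA*), then A ≤⁻ B in the minus order (there exist bounded idempotents Q̃, Q with A = Q̃B = BQ). -/
open ContinuousLinearMap

lemma helper_proj {H K : Type*} [NormedAddCommGroup H] [InnerProductSpace ℂ H] [CompleteSpace H]
    [NormedAddCommGroup K] [InnerProductSpace ℂ K] [CompleteSpace K]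
    (A B : H →L[ℂ] K)
    (h : (adjoint A) ∘L A = (adjoint A) ∘L B) :
    ∃ P : K →L[ℂ] K, P ∘L P = P ∧ adjoint P = P ∧ A = P ∘L B := by
  set U := (LinearMap.range (A : H →ₗ[ℂ] K)).topologicalClosure with hU
  refine ⟨U.subtypeL ∘L U.orthogonalProjectionOnto, ?_, ?_, ?_⟩
  · ext x
    simp [Submodule.orthogonalProjectionOnto_mem_subspace_eq_self, Submodule.starProjection_eq_self_iff, Submodule.starProjection_apply_mem]
  · exact (isSelfAdjoint_starProjection U).adjoint_eq
  · ext x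
    have hAdj : adjoint A (B x - A x) = 0 := by
      have hx : adjoint A (A x) = adjoint A (B x) := by
        rw [← ContinuousLinearMap.comp_apply, h, ContinuousLinearMap.comp_apply]
      simp [map_sub, hx]
    have hUorth : Uᗮ = (LinearMap.range (A : H →ₗ[ℂ] K))ᗮ := by
      rw [hU, ← Submodule.orthogonal_orthogonal_eq_closure,
        Submodule.triorthogonal_eq_orthogonal]
    have hdiff : B x - A x ∈ Uᗮ := by
      rw [hUorth, Submodule.mem_orthogonal]
      rintro u ⟨z, rfl⟩
      rw [ContinuousLinearMap.coe_coe, ← ContinuousLinearMap.adjoint_inner_right, hAdj, inner_zero_right]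
    have hmem : A x ∈ U := (LinearMap.range (A : H →ₗ[ℂ] K)).le_topologicalClosure ⟨x, rfl⟩
    have hBx : B x = A x + (B x - A x) := by abel
    simp only [ContinuousLinearMap.coe_comp', Function.comp_apply]
    rw [hBx, map_add, Submodule.orthogonalProjectionOnto_apply_of_mem_orthogonal hdiff,
      add_zero]
    simp only [Submodule.subtypeL_apply]
    exact (Submodule.starProjection_eq_self_iff.mpr hmem).symm

theorem stmt4 {H K : Type*} [NormedAddCommGroup H] [InnerProductSpace ℂ H] [CompleteSpace H]
    [NormedAddCommGroup K] [InnerProductSpace ℂ K] [CompleteSpace K]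
    (A B : H →L[ℂ] K)
    (h1 : (adjoint A) ∘L A = (adjoint A) ∘L B)
    (h2 : A ∘L (adjoint A) = B ∘L (adjoint A)) :
    ∃ (Qt : K →L[ℂ] K) (Q : H →L[ℂ] H),
      Qt ∘L Qt = Qt ∧ Q ∘L Q = Q ∧ A = Qt ∘L B ∧ A = B ∘L Q := by
  obtain ⟨P, hPP, hPsa, hPA⟩ := helper_proj A B h1
  have h2' : (adjoint (adjoint A)) ∘L (adjoint A) = (adjoint (adjoint A)) ∘L (adjoint B) := by
    rw [adjoint_adjoint]
    have := congrArg adjoint h2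
    rwa [adjoint_comp, adjoint_comp, adjoint_adjoint] at this
  obtain ⟨Q, hQQ, hQsa, hQA⟩ := helper_proj (adjoint A) (adjoint B) h2'
  refine ⟨P, Q, hPP, hQQ, hPA, ?_⟩
  have := congrArg adjoint hQA
  rwa [adjoint_adjoint, adjoint_comp, hQsa, adjoint_adjoint] at this
end

section
/- If A ≤⁻ B in the minus order, then A ≤⁺ B in the plus order; i.e., if A = Q̃B = BQ for bounded idempotents Q̃, Q, then range(A) ⊆ range(B), range(A*) ⊆ range(B*), and A = Q̃' B Q' for some bounded idempotents Q̃', Q'. -/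
open ContinuousLinearMap

theorem stmt5 {H K : Type*} [NormedAddCommGroup H] [InnerProductSpace ℂ H] [CompleteSpace H]
    [NormedAddCommGroup K] [InnerProductSpace ℂ K] [CompleteSpace K]
    (A B : H →L[ℂ] K)
    (h : ∃ (Qt : K →L[ℂ] K) (Q : H →L[ℂ] H),
      Qt ∘L Qt = Qt ∧ Q ∘L Q = Q ∧ A = Qt ∘L B ∧ A = B ∘L Q) :
    LinearMap.range (A : H →ₗ[ℂ] K) ≤ LinearMap.range (B : H →ₗ[ℂ] K) ∧
    LinearMap.range (adjoint A : K →ₗ[ℂ] H) ≤ LinearMap.range (adjoint B : K →ₗ[ℂ] H) ∧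
    ∃ (Qt' : K →L[ℂ] K) (Q' : H →L[ℂ] H),
      Qt' ∘L Qt' = Qt' ∧ Q' ∘L Q' = Q' ∧ A = Qt' ∘L (B ∘L Q') := by
  obtain ⟨Qt, Q, hQt, hQ, hA1, hA2⟩ := h
  refine ⟨?_, ?_, Qt, Q, hQt, hQ, ?_⟩
  · rintro x ⟨y, rfl⟩
    exact ⟨Q y, by rw [hA2]; rfl⟩
  · rintro x ⟨y, rfl⟩
    refine ⟨adjoint Qt y, ?_⟩
    rw [hA1, adjoint_comp]; rfl
  · calc A = Qt ∘L B := hA1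
    _ = Qt ∘L (Qt ∘L B) := by rw [← comp_assoc, hQt]
    _ = Qt ∘L A := by rw [← hA1]
    _ = Qt ∘L (B ∘L Q) := by rw [← hA2]
end

section
/- If A ≤◇ B in the diamond order (range(A) ⊆ range(B), range(A*) ⊆ range(B*), and AA*A = AB*A), then A ≤⁺ B in the plus order: there exist bounded idempotents Q̃ and Q with A = Q̃ B Q. -/
open ContinuousLinearMap
open scoped InnerProductSpace

theorem stmt6 {H K : Type*} [NormedAddCommGroup H] [InnerProductSpace ℂ H] [CompleteSpace H]
    [NormedAddCommGroup K] [InnerProductSpace ℂ K] [CompleteSpace K]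
    (A B : H →L[ℂ] K)
    (h1 : LinearMap.range (A : H →ₗ[ℂ] K) ≤ LinearMap.range (B : H →ₗ[ℂ] K))
    (h2 : LinearMap.range ((adjoint A : K →L[ℂ] H) : K →ₗ[ℂ] H) ≤ LinearMap.range ((adjoint B : K →L[ℂ] H) : K →ₗ[ℂ] H))
    (h3 : A ∘L ((adjoint A) ∘L A) = A ∘L ((adjoint B) ∘L A)) :
    ∃ (Qt : K →L[ℂ] K) (Q : H →L[ℂ] H),
      Qt ∘L Qt = Qt ∧ Q ∘L Q = Q ∧ A = Qt ∘L (B ∘L Q) := by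
  set U : Submodule ℂ K := (LinearMap.range (A : H →ₗ[ℂ] K)).topologicalClosure with hU
  set V : Submodule ℂ H := (LinearMap.range ((adjoint A : K →L[ℂ] H) : K →ₗ[ℂ] H)).topologicalClosure with hV
  haveI : CompleteSpace U := (LinearMap.range (A : H →ₗ[ℂ] K)).isClosed_topologicalClosure.completeSpace_coe
  haveI : CompleteSpace V :=
    (LinearMap.range ((adjoint A : K →L[ℂ] H) : K →ₗ[ℂ] H)).isClosed_topologicalClosure.completeSpace_coe
  refine ⟨U.subtypeL ∘L Submodule.orthogonalProjectionOnto U, V.subtypeL ∘L Submodule.orthogonalProjectionOnto V, ?_, ?_, ?_⟩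
  · ext x
    simp [Submodule.starProjection_eq_self_iff.mpr (show U.starProjection x ∈ U from (Submodule.orthogonalProjectionOnto U x).2)]
  · ext x
    simp [Submodule.starProjection_eq_self_iff.mpr (show V.starProjection x ∈ V from (Submodule.orthogonalProjectionOnto V x).2)]
  · -- adjoint of h3 : A* ∘ A ∘ A* = A* ∘ B ∘ A*
    have h3' : adjoint A ∘L (A ∘L adjoint A) = adjoint A ∘L (B ∘L adjoint A) := by
      have := congrArg ContinuousLinearMap.adjoint h3
      simpa [adjoint_comp, ← comp_assoc] using this
    -- A* ∘ (B - A) vanishes on V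
    have hR : ∀ x ∈ V, adjoint A ((B - A) x) = 0 := by
      intro x hx
      have hle : LinearMap.range ((adjoint A : K →L[ℂ] H) : K →ₗ[ℂ] H) ≤
          LinearMap.ker ((adjoint A ∘L ((B - A) : H →L[ℂ] K)) : H →ₗ[ℂ] H) := by
        rintro _ ⟨u, rfl⟩
        have h := DFunLike.congr_fun h3' u
        simp only [coe_comp', Function.comp_apply] at h
        simp only [LinearMap.mem_ker, ContinuousLinearMap.coe_coe, coe_comp', Function.comp_apply, sub_apply, map_sub]
        rw [sub_eq_zero]
        exact h.symm
      have hker : (LinearMap.range ((adjoint A : K →L[ℂ] H) : K →ₗ[ℂ] H)).topologicalClosure ≤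
          LinearMap.ker ((adjoint A ∘L ((B - A) : H →L[ℂ] K)) : H →ₗ[ℂ] H) :=
        Submodule.topologicalClosure_minimal _ hle
          (ContinuousLinearMap.isClosed_ker (adjoint A ∘L ((B - A) : H →L[ℂ] K)))
      exact hker hx
    ext x
    set q : H := (Submodule.orthogonalProjectionOnto V x : H) with hq
    have hqV : q ∈ V := (Submodule.orthogonalProjectionOnto V x).2
    -- Step 1 : A q = A x
    have step1 : A q = A x := by
      have hxq : x - q ∈ Vᗮ := Submodule.sub_starProjection_mem_orthogonal x
      have hAz : A (x - q) = 0 := by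
        have h0 : ⟪A (x - q), A (x - q)⟫_ℂ = 0 := by
          rw [← adjoint_inner_right]
          exact Submodule.inner_left_of_mem_orthogonal
            ((LinearMap.range ((adjoint A : K →L[ℂ] H) : K →ₗ[ℂ] H)).le_topologicalClosure ⟨A (x - q), rfl⟩) hxq
        exact inner_self_eq_zero.mp h0
      have h := map_sub A x q
      rw [hAz] at h
      exact (sub_eq_zero.mp h.symm).symm
    -- Step 2 : (B - A) q ⊥ U
    set w : K := (B - A) q with hw
    have hAw : adjoint A w = 0 := hR q hqV
    have key : ∀ u ∈ U, ⟪u, w⟫_ℂ = 0 := by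
      intro u hu
      have hle : LinearMap.range (A : H →ₗ[ℂ] K) ≤ LinearMap.ker ((innerSL ℂ w : K →L[ℂ] ℂ) : K →ₗ[ℂ] ℂ) := by
        rintro _ ⟨v, rfl⟩
        have : ⟪A v, w⟫_ℂ = 0 := by
          rw [← adjoint_inner_right, hAw, inner_zero_right]
        simp only [LinearMap.mem_ker, ContinuousLinearMap.coe_coe, innerSL_apply_apply]
        rw [← inner_conj_symm, this, map_zero]
      have hker : (LinearMap.range (A : H →ₗ[ℂ] K)).topologicalClosure ≤ LinearMap.ker ((innerSL ℂ w : K →L[ℂ] ℂ) : K →ₗ[ℂ] ℂ) :=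
        Submodule.topologicalClosure_minimal _ hle
          (ContinuousLinearMap.isClosed_ker (innerSL ℂ w))
      have h0 : ⟪w, u⟫_ℂ = 0 := hker hu
      rw [← inner_conj_symm, h0, map_zero]
    have hwU : w ∈ Uᗮ := (Submodule.mem_orthogonal U w).mpr key
    have proj0 : Submodule.orthogonalProjectionOnto U w = 0 := Submodule.orthogonalProjectionOnto_eq_zero_iff.mpr hwU
    have hAxU : A x ∈ U := (LinearMap.range (A : H →ₗ[ℂ] K)).le_topologicalClosure ⟨x, rfl⟩
    have projAx : (Submodule.orthogonalProjectionOnto U (A x) : K) = A x :=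
      Submodule.starProjection_eq_self_iff.mpr hAxU
    have hBq : B q = w + A x := by
      rw [hw]
      simp [step1]
    simp only [coe_comp', Function.comp_apply, Submodule.coe_subtypeL', Submodule.coe_subtype]
    rw [← hq, hBq, map_add, proj0]
    simp [projAx]
end

section
/- If A ≤⁻ B in the minus order, then every bounded inner inverse of B is an inner inverse of A: for any bounded operator B⁻ with B B⁻ B = B, one has A B⁻ A = A. -/
open ContinuousLinearMap

theorem stmt7 {H K : Type*} [NormedAddCommGroup H] [InnerProductSpace ℂ H] [CompleteSpace H]
    [NormedAddCommGroup K] [InnerProductSpace ℂ K] [CompleteSpace K]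
    (A B : H →L[ℂ] K)
    (h : ∃ (Qt : K →L[ℂ] K) (Q : H →L[ℂ] H),
      Qt ∘L Qt = Qt ∧ Q ∘L Q = Q ∧ A = Qt ∘L B ∧ A = B ∘L Q) :
    ∀ Bm : K →L[ℂ] H, B ∘L (Bm ∘L B) = B → A ∘L (Bm ∘L A) = A := by
  obtain ⟨Qt, Q, hQt, hQ, hA1, hA2⟩ := h
  intro Bm hBm
  have key : A ∘L (Bm ∘L A) = Qt ∘L ((B ∘L (Bm ∘L B)) ∘L Q) := by
    nth_rewrite 1 [hA1]; nth_rewrite 1 [hA2]; simp only [comp_assoc]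
  rw [key, hBm, ← hA2, hA1, ← comp_assoc, hQt, ← hA1]
end

section
/- Suppose range(A) ⊆ range(B) and range(A*) ⊆ range(B*), and suppose some bounded inner inverse of B is also an inner inverse of A (i.e., there is B⁻ ∈ L(K,H) with B B⁻ B = B and A B⁻ A = A). Then every bounded inner inverse of B is an inner inverse of A. -/
open ContinuousLinearMap

theorem stmt8 {H K : Type*} [NormedAddCommGroup H] [InnerProductSpace ℂ H] [CompleteSpace H]
    [NormedAddCommGroup K] [InnerProductSpace ℂ K] [CompleteSpace K]
    (A B : H →L[ℂ] K)
    (h1 : LinearMap.range (A : H →ₗ[ℂ] K) ≤ LinearMap.range (B : H →ₗ[ℂ] K))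
    (h2 : LinearMap.range (adjoint A : K →ₗ[ℂ] H) ≤ LinearMap.range (adjoint B : K →ₗ[ℂ] H))
    (h3 : ∃ Bm : K →L[ℂ] H, B ∘L (Bm ∘L B) = B ∧ A ∘L (Bm ∘L A) = A) :
    ∀ Bm' : K →L[ℂ] H, B ∘L (Bm' ∘L B) = B → A ∘L (Bm' ∘L A) = A := by
  intro Bm' hBm'
  obtain ⟨Bm, hB, hA⟩ := h3
  -- ker B ≤ ker A
  have hker : ∀ v : H, B v = 0 → A v = 0 := by
    intro v hv
    obtain ⟨z, hz⟩ := h2 ⟨A v, rfl⟩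
    have : (inner ℂ (A v) (A v) : ℂ) = 0 := by
      calc (inner ℂ (A v) (A v) : ℂ) = inner ℂ (adjoint A (A v)) v := by
            rw [adjoint_inner_left]
        _ = inner ℂ (adjoint B z) v := by simp only [ContinuousLinearMap.coe_coe] at hz; rw [hz]
        _ = inner ℂ z (B v) := by rw [adjoint_inner_left]
        _ = 0 := by rw [hv, inner_zero_right]
    exact inner_self_eq_zero.mp this
  ext x
  obtain ⟨u, hu⟩ := h1 ⟨x, rfl⟩
  have key : ∀ C : K →L[ℂ] H, B ∘L (C ∘L B) = B → A (C (A x)) = A u := by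
    intro C hC
    have h0 : B (C (B u) - u) = 0 := by
      have := congrArg (fun T : H →L[ℂ] K => T u) hC
      simp only [comp_apply] at this
      simp [this]
    have := hker _ h0
    rw [map_sub, sub_eq_zero] at this
    simp only [ContinuousLinearMap.coe_coe] at hu; rw [← hu, this]
  have e1 : A (Bm' (A x)) = A u := key Bm' hBm'
  have e2 : A (Bm (A x)) = A u := key Bm hB
  have e3 : A (Bm (A x)) = A x := by
    have := congrArg (fun T : H →L[ℂ] K => T x) hA
    simpa using this
  simp only [comp_apply]
  rw [e1, ← e2, e3]
end

section
/- For bounded operators A, B between Hilbert spaces, A is below B in the left star order (A*A = A*B and range(A) ⊆ range(B)) if and only if B = A + C for some bounded operator C with range(C) ⊆ range(B) and A*C = 0. -/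
open ContinuousLinearMap

theorem stmt12 {H K : Type*} [NormedAddCommGroup H] [InnerProductSpace ℂ H] [CompleteSpace H]
    [NormedAddCommGroup K] [InnerProductSpace ℂ K] [CompleteSpace K]
    (A B : H →L[ℂ] K) :
    ((adjoint A) ∘L A = (adjoint A) ∘L B ∧ LinearMap.range (A : H →ₗ[ℂ] K) ≤ LinearMap.range (B : H →ₗ[ℂ] K)) ↔
    (∃ C : H →L[ℂ] K, LinearMap.range (C : H →ₗ[ℂ] K) ≤ LinearMap.range (B : H →ₗ[ℂ] K) ∧
      (adjoint A) ∘L C = 0 ∧ B = A + C) := by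
  constructor
  · rintro ⟨h1, h2⟩
    refine ⟨B - A, ?_, ?_, by abel⟩
    · rintro y ⟨x, rfl⟩
      exact Submodule.sub_mem _ ⟨x, rfl⟩ (h2 ⟨x, rfl⟩)
    · ext x
      simp only [comp_apply, sub_apply, map_sub, zero_apply]
      have := congrArg (fun T : H →L[ℂ] H => T x) h1
      simp only [comp_apply] at this
      rw [← this]
      abel
  · rintro ⟨C, hr, h0, rfl⟩
    constructor
    · ext x
      have := congrArg (fun T : H →L[ℂ] H => T x) h0
      simp only [comp_apply, zero_apply] at this
      simp [comp_apply, this]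
    · rintro y ⟨x, rfl⟩
      have : (A : H →ₗ[ℂ] K) x = (A + C) x - C x := by simp
      rw [this]
      exact Submodule.sub_mem _ ⟨x, rfl⟩ (hr ⟨x, rfl⟩)
end

section
/- For bounded operators A, B between Hilbert spaces, A ≤⁻ B in the minus order if and only if there exist bounded operators X ∈ L(K) and Y ∈ L(H) such that A = XB = BY and A = XA. -/
open ContinuousLinearMap

theorem stmt13 {H K : Type*} [NormedAddCommGroup H] [InnerProductSpace ℂ H] [CompleteSpace H]
    [NormedAddCommGroup K] [InnerProductSpace ℂ K] [CompleteSpace K]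
    (A B : H →L[ℂ] K) :
    (∃ (Qt : K →L[ℂ] K) (Q : H →L[ℂ] H),
      Qt ∘L Qt = Qt ∧ Q ∘L Q = Q ∧ A = Qt ∘L B ∧ A = B ∘L Q) ↔
    (∃ (X : K →L[ℂ] K) (Y : H →L[ℂ] H),
      A = X ∘L B ∧ A = B ∘L Y ∧ A = X ∘L A) := by
  constructor
  · rintro ⟨Qt, Q, hQt2, hQ2, hA1, hA2⟩
    refine ⟨Qt, Q, hA1, hA2, ?_⟩
    calc A = Qt ∘L B := hA1
    _ = (Qt ∘L Qt) ∘L B := by rw [hQt2]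
    _ = Qt ∘L (Qt ∘L B) := by rw [comp_assoc]
    _ = Qt ∘L A := by rw [← hA1]
  · rintro ⟨X, Y, hXB, hBY, hXA⟩
    -- A ∘ Y = A
    have hAY : A ∘L Y = A := by
      calc A ∘L Y = (X ∘L B) ∘L Y := by rw [← hXB]
      _ = X ∘L (B ∘L Y) := by rw [comp_assoc]
      _ = X ∘L A := by rw [← hBY]
      _ = A := hXA.symm
    set PB : Submodule ℂ K := (LinearMap.range (B : H →ₗ[ℂ] K)).topologicalClosure with hPBdef
    set PA : Submodule ℂ H := (LinearMap.range ((adjoint A : K →L[ℂ] H) : K →ₗ[ℂ] H)).topologicalClosure with hPAdef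
    set P : K →L[ℂ] K := PB.subtypeL ∘L Submodule.orthogonalProjectionOnto PB with hPdef
    set P' : H →L[ℂ] H := PA.subtypeL ∘L Submodule.orthogonalProjectionOnto PA with hP'def
    have hPmem : ∀ x ∈ PB, P x = x := fun x hx => by
      simp [hPdef, Submodule.starProjection_eq_self_iff.2 hx]
    have hP'mem : ∀ x ∈ PA, P' x = x := fun x hx => by
      simp [hP'def, Submodule.starProjection_eq_self_iff.2 hx]
    have hP'zero : ∀ x ∈ PAᗮ, P' x = 0 := fun x hx => by
      simp [hP'def, Submodule.orthogonalProjectionOnto_apply_of_mem_orthogonal hx]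
    have hPB_B : ∀ h, B h ∈ PB :=
      fun h => (LinearMap.range (B : H →ₗ[ℂ] K)).le_topologicalClosure ⟨h, rfl⟩
    have hPB_A : ∀ h, A h ∈ PB := fun h => by
      rw [hBY]; exact hPB_B (Y h)
    -- ker A ⊆ PAᗮ
    have hkerA : ∀ x, A x = 0 → x ∈ PAᗮ := by
      intro x hx
      rw [hPAdef, ← (LinearMap.range ((adjoint A : K →L[ℂ] H) : K →ₗ[ℂ] H)).orthogonal_orthogonal_eq_closure,
        Submodule.orthogonal_orthogonal_eq_closure]
      have : x ∈ (LinearMap.range ((adjoint A : K →L[ℂ] H) : K →ₗ[ℂ] H))ᗮ := by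
        rintro u ⟨k, rfl⟩
        rw [ContinuousLinearMap.coe_coe, adjoint_inner_left, hx, inner_zero_right]
      exact Submodule.le_topologicalClosure _ this
    -- PAᗮ ⊆ ker A
    have hkerA' : ∀ x ∈ PAᗮ, A x = 0 := by
      intro x hx
      have hx' : x ∈ (LinearMap.range ((adjoint A : K →L[ℂ] H) : K →ₗ[ℂ] H))ᗮ :=
        Submodule.orthogonal_le (Submodule.le_topologicalClosure _) hx
      have h1 : ∀ k, (inner ℂ (A x) k : ℂ) = 0 := by
        intro k
        have h := hx' (adjoint A k) ⟨k, rfl⟩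
        rw [adjoint_inner_left] at h
        rw [← inner_conj_symm, h, map_zero]
      have h2 : (inner ℂ (A x) (A x) : ℂ) = 0 := by
        rw [← inner_conj_symm, h1, map_zero]
      rwa [inner_self_eq_zero] at h2
    refine ⟨X ∘L P, Y ∘L P', ?_, ?_, ?_, ?_⟩
    · -- (X ∘ P) idempotent
      have key : ∀ w ∈ PB, X (P (X w)) = X w := by
        intro w hw
        have hcl : (LinearMap.range (B : H →ₗ[ℂ] K) : Set K) ⊆ {w | X (P (X w)) = X w} := by
          rintro _ ⟨h, rfl⟩
          have h1 : X (B h) = A h := congrFun (congrArg DFunLike.coe hXB.symm) h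
          have h2 : X (A h) = A h := (congrFun (congrArg DFunLike.coe hXA.symm) h)
          simp only [Set.mem_setOf_eq, ContinuousLinearMap.coe_coe, h1, hPmem _ (hPB_A h), h2]
        have hclosed : IsClosed {w : K | X (P (X w)) = X w} :=
          isClosed_eq (X.continuous.comp (P.continuous.comp X.continuous)) X.continuous
        have := closure_minimal hcl hclosed
        exact this (by rw [← Submodule.topologicalClosure_coe]; exact hw)
      ext k
      simp only [coe_comp', Function.comp_apply]
      have hPk : P k ∈ PB := by
        simp [hPdef, Submodule.coe_mem]
      rw [key _ hPk]
    · -- (Y ∘ P') idempotent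
      have key : ∀ w ∈ PA, P' (Y w) = w := by
        intro w hw
        have hcl : (LinearMap.range ((adjoint A : K →L[ℂ] H) : K →ₗ[ℂ] H) : Set H) ⊆ {w | P' (Y w) = w} := by
          rintro _ ⟨k, rfl⟩
          have h0 : A (Y (adjoint A k) - adjoint A k) = 0 := by
            have := congrFun (congrArg DFunLike.coe hAY) (adjoint A k)
            simp only [coe_comp', Function.comp_apply] at this
            simp [map_sub, this]
          have h1 : Y (adjoint A k) - adjoint A k ∈ PAᗮ := hkerA _ h0
          have h2 : adjoint A k ∈ PA :=
            Submodule.le_topologicalClosure _ ⟨k, rfl⟩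
          have : P' (Y (adjoint A k)) =
              P' (adjoint A k) + P' (Y (adjoint A k) - adjoint A k) := by
            rw [← map_add]; congr 1; abel
          simp only [Set.mem_setOf_eq, ContinuousLinearMap.coe_coe, this, hP'mem _ h2, hP'zero _ h1, add_zero]
        have hclosed : IsClosed {w : H | P' (Y w) = w} :=
          isClosed_eq (P'.continuous.comp Y.continuous) continuous_id
        have := closure_minimal hcl hclosed
        exact this (by rw [← Submodule.topologicalClosure_coe]; exact hw)
      ext h
      simp only [coe_comp', Function.comp_apply]
      have hPh : P' h ∈ PA := by
        simp [hP'def, Submodule.coe_mem]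
      rw [key _ hPh]
    · -- A = (X ∘ P) ∘ B
      ext h
      simp only [coe_comp', Function.comp_apply]
      rw [hPmem _ (hPB_B h)]
      exact congrFun (congrArg DFunLike.coe hXB) h
    · -- A = B ∘ (Y ∘ P')
      ext h
      simp only [coe_comp', Function.comp_apply]
      have h1 : B (Y (P' h)) = A (P' h) := (congrFun (congrArg DFunLike.coe hBY) (P' h)).symm
      have h2 : A (P' h) = A h := by
        have : A (P' h - h) = 0 := by
          apply hkerA'
          have := Submodule.sub_starProjection_mem_orthogonal (K := PA) h
          have heq : P' h - h = -(h - PA.starProjection h) := by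
            simp [hP'def]
          rw [heq]
          exact neg_mem this
        have h3 : A (P' h) - A h = 0 := by rw [← map_sub]; exact this
        exact sub_eq_zero.mp h3
      rw [h1, h2]
end

section
/- For bounded idempotents Q, Q' on a Hilbert space H, Q ≤⁻ Q' in the minus order if and only if range(Q) ⊆ range(Q') and range(Q*) ⊆ range(Q'*); moreover in that case Q = Q'Q = QQ'. -/
open ContinuousLinearMap

private lemma aux16 {H : Type*} [NormedAddCommGroup H] [InnerProductSpace ℂ H]
    (Q Q' : H →L[ℂ] H) (hQ' : Q' ∘L Q' = Q')
    (h : LinearMap.range (Q : H →ₗ[ℂ] H) ≤ LinearMap.range (Q' : H →ₗ[ℂ] H)) : Q' ∘L Q = Q := by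
  ext x
  obtain ⟨y, hy⟩ := h ⟨x, rfl⟩
  have : Q' (Q' y) = Q' y := congrFun (congrArg DFunLike.coe hQ') y
  simp [← (show Q' y = Q x from hy), this]

theorem stmt16 {H : Type*} [NormedAddCommGroup H] [InnerProductSpace ℂ H] [CompleteSpace H]
    (Q Q' : H →L[ℂ] H) (hQ : Q ∘L Q = Q) (hQ' : Q' ∘L Q' = Q') :
    ((∃ (Qt Qh : H →L[ℂ] H),
        Qt ∘L Qt = Qt ∧ Qh ∘L Qh = Qh ∧ Q = Qt ∘L Q' ∧ Q = Q' ∘L Qh) ↔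
      (LinearMap.range (Q : H →ₗ[ℂ] H) ≤ LinearMap.range (Q' : H →ₗ[ℂ] H) ∧
        LinearMap.range (adjoint Q : H →ₗ[ℂ] H) ≤ LinearMap.range (adjoint Q' : H →ₗ[ℂ] H))) ∧
    ((LinearMap.range (Q : H →ₗ[ℂ] H) ≤ LinearMap.range (Q' : H →ₗ[ℂ] H) ∧
        LinearMap.range (adjoint Q : H →ₗ[ℂ] H) ≤ LinearMap.range (adjoint Q' : H →ₗ[ℂ] H)) →
      (Q = Q' ∘L Q ∧ Q = Q ∘L Q')) := by
  have hQ'adj : adjoint Q' ∘L adjoint Q' = adjoint Q' := by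
    rw [← adjoint_comp, hQ']
  have key : (LinearMap.range (Q : H →ₗ[ℂ] H) ≤ LinearMap.range (Q' : H →ₗ[ℂ] H) ∧
        LinearMap.range (adjoint Q : H →ₗ[ℂ] H) ≤ LinearMap.range (adjoint Q' : H →ₗ[ℂ] H)) →
      (Q = Q' ∘L Q ∧ Q = Q ∘L Q') := by
    rintro ⟨h1, h2⟩
    have e1 : Q' ∘L Q = Q := aux16 Q Q' hQ' h1
    have e2 : adjoint Q' ∘L adjoint Q = adjoint Q := aux16 _ _ hQ'adj h2
    have e3 : Q ∘L Q' = Q := by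
      have := congrArg adjoint e2
      rwa [← adjoint_comp, adjoint_adjoint, adjoint_adjoint] at this
    exact ⟨e1.symm, e3.symm⟩
  refine ⟨⟨?_, fun h => ⟨Q, Q, hQ, hQ, (key h).2, (key h).1⟩⟩, key⟩
  rintro ⟨Qt, Qh, -, -, h1, h2⟩
  constructor
  · rintro x ⟨y, rfl⟩
    exact ⟨Qh y, by rw [h2]; rfl⟩
  · rintro x ⟨y, rfl⟩
    refine ⟨adjoint Qt y, ?_⟩
    rw [show adjoint Q = adjoint Q' ∘L adjoint Qt by rw [h1, adjoint_comp]]; rfl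
end

section
/- Let T and T' be products of two orthogonal projections, T = P_T P_{T*} and T' = P_{T'} P_{T'*}, where P_T, P_{T*} denote the orthogonal projections onto the closures of range(T) and range(T*) (and similarly for T'). If closure(range T) ⊆ closure(range T') and closure(range T*) ⊆ closure(range T'*), then T T* T = T (T')* T, i.e., T is below T' in the diamond order whenever additionally range(T) ⊆ range(T') and range(T*) ⊆ range(T'*). -/
open ContinuousLinearMap

lemma aux_comp_le {H : Type*} [NormedAddCommGroup H] [InnerProductSpace ℂ H] [CompleteSpace H]
    (U V : Submodule ℂ H) [CompleteSpace U] [CompleteSpace V]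
    (h : U ≤ V) :
    (V.subtypeL ∘L Submodule.orthogonalProjectionOnto V) ∘L (U.subtypeL ∘L Submodule.orthogonalProjectionOnto U) =
      U.subtypeL ∘L Submodule.orthogonalProjectionOnto U := by
  ext x
  simp only [coe_comp', Function.comp_apply, Submodule.coe_subtypeL', Submodule.coe_subtype]
  exact Submodule.starProjection_eq_self_iff (K := V).mpr (h (Submodule.orthogonalProjectionOnto U x).2)

lemma aux_sa {H : Type*} [NormedAddCommGroup H] [InnerProductSpace ℂ H] [CompleteSpace H]
    (U : Submodule ℂ H) [CompleteSpace U] :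
    adjoint (U.subtypeL ∘L Submodule.orthogonalProjectionOnto U) = U.subtypeL ∘L Submodule.orthogonalProjectionOnto U :=
  (isSelfAdjoint_starProjection U)

theorem stmt17 {H : Type*} [NormedAddCommGroup H] [InnerProductSpace ℂ H] [CompleteSpace H]
    (T T' : H →L[ℂ] H)
    (hT : T = (projCR T) ∘L (projCR (adjoint T)))
    (hT' : T' = (projCR T') ∘L (projCR (adjoint T')))
    (h1 : (LinearMap.range (T : H →ₗ[ℂ] H)).topologicalClosure ≤ (LinearMap.range (T' : H →ₗ[ℂ] H)).topologicalClosure)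
    (h2 : (LinearMap.range ((adjoint T : H →L[ℂ] H) : H →ₗ[ℂ] H)).topologicalClosure ≤
      (LinearMap.range ((adjoint T' : H →L[ℂ] H) : H →ₗ[ℂ] H)).topologicalClosure) :
    T ∘L ((adjoint T) ∘L T) = T ∘L ((adjoint T') ∘L T) := by
  set U := (LinearMap.range (T : H →ₗ[ℂ] H)).topologicalClosure with hU
  set V := (LinearMap.range (T' : H →ₗ[ℂ] H)).topologicalClosure with hV
  set U' := (LinearMap.range ((adjoint T : H →L[ℂ] H) : H →ₗ[ℂ] H)).topologicalClosure with hU'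
  set V' := (LinearMap.range ((adjoint T' : H →L[ℂ] H) : H →ₗ[ℂ] H)).topologicalClosure with hV'
  set P : H →L[ℂ] H := U.subtypeL ∘L Submodule.orthogonalProjectionOnto U with hP
  set Q : H →L[ℂ] H := U'.subtypeL ∘L Submodule.orthogonalProjectionOnto U' with hQ
  set P' : H →L[ℂ] H := V.subtypeL ∘L Submodule.orthogonalProjectionOnto V with hP'
  set Q' : H →L[ℂ] H := V'.subtypeL ∘L Submodule.orthogonalProjectionOnto V' with hQ'
  have hPsa : adjoint P = P := aux_sa U
  have hQsa : adjoint Q = Q := aux_sa U'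
  have hP'sa : adjoint P' = P' := aux_sa V
  have hQ'sa : adjoint Q' = Q' := aux_sa V'
  have hTPQ : T = P ∘L Q := hT
  have hT'PQ : T' = P' ∘L Q' := hT'
  have hadjT : adjoint T = Q ∘L P := by
    rw [hTPQ, adjoint_comp, hPsa, hQsa]
  have hadjT' : adjoint T' = Q' ∘L P' := by
    rw [hT'PQ, adjoint_comp, hP'sa, hQ'sa]
  have hPP : P * P = P := aux_comp_le U U le_rfl
  have hQQ : Q * Q = Q := aux_comp_le U' U' le_rfl
  have hP'P : P' * P = P := aux_comp_le U V h1
  have hQ'Q : Q' * Q = Q := aux_comp_le U' V' h2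
  have hQQ' : Q * Q' = Q := by
    have h3 := congrArg star hQ'Q
    rwa [star_mul, star_eq_adjoint, star_eq_adjoint, hQsa, hQ'sa] at h3
  rw [hadjT, hadjT', hTPQ]
  simp only [← ContinuousLinearMap.mul_def, ← mul_assoc]
  rw [mul_assoc P Q Q, hQQ, mul_assoc (P*Q) P P, hPP,
    mul_assoc ((P*Q)*Q') P' P, hP'P, mul_assoc P Q Q', hQQ']
end

section
/- Let F, G be partial isometries between Hilbert spaces (F*F and G*G are orthogonal projections). If F ≤◇ G in the diamond order (range(F) ⊆ range(G), range(F*) ⊆ range(G*), and FF*F = FG*F), then F ≤* G in the star order: GF* = FF* and F*G = F*F. -/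
open ContinuousLinearMap

lemma aux_adjoint_comp_self_zero {H K : Type*} [NormedAddCommGroup H] [InnerProductSpace ℂ H]
    [CompleteSpace H] [NormedAddCommGroup K] [InnerProductSpace ℂ K] [CompleteSpace K]
    (T : H →L[ℂ] K) (h : (adjoint T) ∘L T = 0) : T = 0 := by
  ext x
  have : (inner ℂ (T x) (T x) : ℂ) = 0 := by
    rw [← adjoint_inner_left]
    have : adjoint T (T x) = 0 := by
      have := congrArg (fun A => A x) h
      simpa using this
    simp [this]
  simpa using inner_self_eq_zero.mp this

set_option maxHeartbeats 1600000 in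
theorem stmt18 {H K : Type*} [NormedAddCommGroup H] [InnerProductSpace ℂ H] [CompleteSpace H]
    [NormedAddCommGroup K] [InnerProductSpace ℂ K] [CompleteSpace K]
    (F G : H →L[ℂ] K)
    (hF : F ∘L ((adjoint F) ∘L F) = F) (hG : G ∘L ((adjoint G) ∘L G) = G)
    (h1 : LinearMap.range (F : H →ₗ[ℂ] K) ≤ LinearMap.range (G : H →ₗ[ℂ] K))
    (h2 : LinearMap.range ((adjoint F : K →L[ℂ] H) : K →ₗ[ℂ] H) ≤ LinearMap.range ((adjoint G : K →L[ℂ] H) : K →ₗ[ℂ] H))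
    (h3 : F ∘L ((adjoint F) ∘L F) = F ∘L ((adjoint G) ∘L F)) :
    G ∘L (adjoint F) = F ∘L (adjoint F) ∧ (adjoint F) ∘L G = (adjoint F) ∘L F := by
  have hFa : adjoint F ∘L (F ∘L adjoint F) = adjoint F := by
    have := congrArg adjoint hF
    rwa [adjoint_comp, adjoint_comp, adjoint_adjoint, comp_assoc] at this
  have hGa : adjoint G ∘L (G ∘L adjoint G) = adjoint G := by
    have := congrArg adjoint hG
    rwa [adjoint_comp, adjoint_comp, adjoint_adjoint, comp_assoc] at this
  -- Fact A : (G ∘L adjoint G) ∘L F = F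
  have factA : (G ∘L adjoint G) ∘L F = F := by
    ext x
    obtain ⟨y, hy⟩ := h1 ⟨x, rfl⟩
    simp only [comp_apply]
    rw [← (id hy : G y = F x)]
    have := congrArg (fun A => A y) hG
    simpa using this
  -- Fact B : (adjoint G ∘L G) ∘L adjoint F = adjoint F
  have factB : (adjoint G ∘L G) ∘L adjoint F = adjoint F := by
    ext x
    obtain ⟨y, hy⟩ := h2 ⟨x, rfl⟩
    simp only [comp_apply]
    rw [← (id hy : adjoint G y = adjoint F x)]
    have := congrArg (fun A => A y) hGa
    simpa using this
  -- key : (F'F)(G'F) = F'F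
  have key : (adjoint F ∘L F) ∘L (adjoint G ∘L F) = adjoint F ∘L F := by
    rw [comp_assoc, ← h3, hF]
  have key' : (adjoint F ∘L G) ∘L (adjoint F ∘L F) = adjoint F ∘L F := by
    have h6 := congrArg adjoint key
    simp only [adjoint_comp, adjoint_adjoint] at h6
    have hsym : adjoint ((adjoint F).comp F) = (adjoint F).comp F := by
      simp only [adjoint_comp, adjoint_adjoint]
    exact h6
  have hproj : (adjoint F ∘L F) ∘L (adjoint F ∘L F) = adjoint F ∘L F := by
    rw [comp_assoc, hF]
  have hGGF : (adjoint F ∘L G) ∘L (adjoint G ∘L F) = adjoint F ∘L F := by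
    rw [comp_assoc, ← comp_assoc G (adjoint G) F, factA]
  have hT : adjoint G ∘L F = adjoint F ∘L F := by
    have sub0 : adjoint G ∘L F - adjoint F ∘L F = 0 := by
      apply aux_adjoint_comp_self_zero
      have hadj : adjoint (adjoint G ∘L F - adjoint F ∘L F)
          = adjoint F ∘L G - adjoint F ∘L F := by
        rw [map_sub, adjoint_comp, adjoint_comp, adjoint_adjoint, adjoint_adjoint]
      rw [hadj, sub_comp, comp_sub, comp_sub, hGGF, key, key', hproj]
      abel
    exact sub_eq_zero.mp sub0
  constructor
  · have hGFF : G ∘L (adjoint F ∘L F) = F := by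
      rw [← hT, ← comp_assoc]
      exact factA
    conv_lhs => rw [← hFa]
    rw [← comp_assoc, ← comp_assoc, comp_assoc G (adjoint F) F, hGFF]
  · have := congrArg adjoint hT
    rwa [adjoint_comp, adjoint_comp, adjoint_adjoint, adjoint_adjoint] at this
end
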